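/- For any real z with 0 ≤ z < 1, the expectation over u uniformly distributed on [-1/2, 1/2) of (⌊z + u⌉ - z)² equals z(1 - z). Equivalently, ∫_{-1/2}^{1/2} (⌊z+u⌉ - z)² du = z(1 - z). -/

import Mathlib

open MeasureTheory

/-- For `0 ≤ z < 1`, the expectation over `u` uniform on `[-1/2, 1/2)` of
`(⌊z + u⌉ - z)²` equals `z(1 - z)`. -/
theorem integral_round_shift_sq (z : ℝ) (hz0 : 0 ≤ z) (hz1 : z < 1) :
    ∫ u in Set.Ico (-(1:ℝ)/2) (1/2), (((round (z + u) : ℤ) : ℝ) - z) ^ 2 = z * (1 - z) := by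
  have h1 : (-(1:ℝ)/2) ≤ 1/2 - z := by linarith
  have h2 : (1:ℝ)/2 - z ≤ 1/2 := by linarith
  have hu : Set.Ico (-(1:ℝ)/2) ((1:ℝ)/2 - z) ∪ Set.Ico ((1:ℝ)/2 - z) ((1:ℝ)/2)
      = Set.Ico (-(1:ℝ)/2) ((1:ℝ)/2) := Set.Ico_union_Ico_eq_Ico h1 h2
  have e1 : Set.EqOn (fun u : ℝ => (((round (z + u) : ℤ) : ℝ) - z) ^ 2)
      (fun _ : ℝ => z ^ 2) (Set.Ico (-(1:ℝ)/2) ((1:ℝ)/2 - z)) := by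
    intro u hu
    have hr : round (z + u) = 0 := by
      rw [round_eq]
      apply Int.floor_eq_zero_iff.mpr
      constructor
      · simp only [Set.mem_Ico] at hu ⊢; linarith [hu.1]
      · simp only [Set.mem_Ico] at hu ⊢; linarith [hu.2]
    simp [hr]
  have e2 : Set.EqOn (fun u : ℝ => (((round (z + u) : ℤ) : ℝ) - z) ^ 2)
      (fun _ : ℝ => (1 - z) ^ 2) (Set.Ico ((1:ℝ)/2 - z) ((1:ℝ)/2)) := by
    intro u hu
    simp only [Set.mem_Ico] at hu
    have hr : round (z + u) = 1 := by
      rw [round_eq]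
      rw [Int.floor_eq_iff]
      constructor
      · push_cast; linarith [hu.1]
      · push_cast; linarith [hu.2]
    simp [hr]
  have i1 : IntegrableOn (fun u : ℝ => (((round (z + u) : ℤ) : ℝ) - z) ^ 2)
      (Set.Ico (-(1:ℝ)/2) ((1:ℝ)/2 - z)) := by
    exact (integrableOn_const measure_Ico_lt_top.ne).congr_fun
      (fun x hx => (e1 hx).symm) measurableSet_Ico
  have i2 : IntegrableOn (fun u : ℝ => (((round (z + u) : ℤ) : ℝ) - z) ^ 2)
      (Set.Ico ((1:ℝ)/2 - z) ((1:ℝ)/2)) := by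
    exact (integrableOn_const measure_Ico_lt_top.ne).congr_fun
      (fun x hx => (e2 hx).symm) measurableSet_Ico
  rw [← hu, setIntegral_union (Set.Ico_disjoint_Ico_same) measurableSet_Ico i1 i2,
    setIntegral_congr_fun measurableSet_Ico e1, setIntegral_congr_fun measurableSet_Ico e2,
    setIntegral_const, setIntegral_const]
  rw [Real.volume_real_Ico, Real.volume_real_Ico]
  rw [max_eq_left (by linarith), max_eq_left (by linarith)]
  simp only [smul_eq_mul]
  ring
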